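/- Let M₀ be an admissible lattice in N₀ such that M₀ ∩ τ(M₀) is τ-stable but M₀ + τ(M₀) is not τ-stable. Let T₀ be a lattice with M₀ ⊂¹ T₀ ⊂¹ M₀^∨ such that τ(M₀) ⊆ T₀. Then T₀ = M₀ + τ(M₀), and the lattice S₀ := pM₀^∨ + pτ(T₀^∨) satisfies pM₀^∨ ⊂¹ S₀ ⊂¹ M₀ and the pair (S₀, T₀) is a web pair for M₀. -/

import Mathlib

noncomputable section

namespace QURZ

variable {W₀ : Type*} [CommRing W₀]

/-- The length of `B / A`: the Krull dimension of the interval `[A, B]`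
in the lattice of submodules. -/
noncomputable def relLength {M : Type*} [AddCommGroup M] [Module W₀ M]
    (A B : Submodule W₀ M) : WithBot ℕ∞ :=
  Order.krullDim (Set.Icc A B)

/-- `SubIdx A B d` means `A ⊆ B` and the quotient `B/A` has length `d`
(written `A ⊂^d B` in the paper). -/
def SubIdx {M : Type*} [AddCommGroup M] [Module W₀ M]
    (A B : Submodule W₀ M) (d : ℕ) : Prop :=
  A ≤ B ∧ relLength A B = ((d : ℕ∞) : WithBot ℕ∞)

/-- The image `c • A` of a submodule `A` under scalar multiplication by `c`. -/
def smulLat {M : Type*} [AddCommGroup M] [Module W₀ M] (c : W₀) (A : Submodule W₀ M) :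
    Submodule W₀ M where
  carrier := {x | ∃ m ∈ A, c • m = x}
  zero_mem' := ⟨0, A.zero_mem, smul_zero c⟩
  add_mem' := by
    rintro a b ⟨m, hm, rfl⟩ ⟨n, hn, rfl⟩
    exact ⟨m + n, A.add_mem hm hn, smul_add c m n⟩
  smul_mem' := by
    rintro d x ⟨m, hm, rfl⟩
    exact ⟨d • m, A.smul_mem d hm, by rw [smul_smul, smul_smul, mul_comm]⟩

/-- The image of a submodule under a `σ₀`-semilinear map, where `σ₀` is a ring
automorphism. -/
def mapLat {M M' : Type*} [AddCommGroup M] [Module W₀ M] [AddCommGroup M'] [Module W₀ M']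
    {σ₀ : W₀ ≃+* W₀} (g : M →ₛₗ[(σ₀ : W₀ →+* W₀)] M') (A : Submodule W₀ M) :
    Submodule W₀ M' where
  carrier := g '' A
  zero_mem' := ⟨0, A.zero_mem, map_zero g⟩
  add_mem' := by
    rintro a b ⟨m, hm, rfl⟩ ⟨n, hn, rfl⟩
    exact ⟨m + n, A.add_mem hm hn, map_add g m n⟩
  smul_mem' := by
    rintro c x ⟨m, hm, rfl⟩
    refine ⟨σ₀.symm c • m, A.smul_mem _ hm, ?_⟩
    rw [map_smulₛₗ]
    simp

variable {K₀ : Type*} [Field K₀] [Algebra W₀ K₀]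
variable {N₀ : Type*} [AddCommGroup N₀] [Module K₀ N₀] [Module W₀ N₀] [IsScalarTower W₀ K₀ N₀]

/-- A lattice: a finitely generated `W₀`-submodule spanning the ambient space over `K₀`. -/
def IsLattice (A : Submodule W₀ N₀) : Prop :=
  A.FG ∧ Submodule.span K₀ (A : Set N₀) = ⊤

/-- The dual lattice with respect to a bilinear form, consisting of the vectors
pairing into `W₀` with all elements of `A`. -/
def dualLat (form : N₀ →ₗ[K₀] N₀ →ₗ[K₀] K₀) (A : Submodule W₀ N₀) : Submodule W₀ N₀ where
  carrier := {x | ∀ y ∈ A, form x y ∈ (algebraMap W₀ K₀).range}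
  zero_mem' := fun y _ => by rw [map_zero, LinearMap.zero_apply]; exact zero_mem _
  add_mem' := by
    intro a b ha hb y hy
    rw [map_add, LinearMap.add_apply]
    exact add_mem (ha y hy) (hb y hy)
  smul_mem' := by
    intro c x hx y hy
    rw [← IsScalarTower.algebraMap_smul K₀ c x, map_smul, LinearMap.smul_apply, smul_eq_mul]
    exact mul_mem (RingHom.mem_range_self _ c) (hx y hy)

/-- An admissible lattice: `p M₀^∨ ⊆ M₀ ⊂² M₀^∨` and `p τ(M₀^∨) ⊆ M₀ ⊂² τ(M₀^∨)`.
These are the `𝔽`-points of the reduced quaternionic unitary Rapoport–Zink space `ℳ`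
with paramodular level. -/
def IsAdmissible (p : ℕ) (form : N₀ →ₗ[K₀] N₀ →ₗ[K₀] K₀)
    {σ₀ : W₀ ≃+* W₀} (τ : N₀ →ₛₗ[(σ₀ : W₀ →+* W₀)] N₀) (M₀ : Submodule W₀ N₀) : Prop :=
  IsLattice (K₀ := K₀) M₀ ∧
  smulLat (p : W₀) (dualLat form M₀) ≤ M₀ ∧
  SubIdx M₀ (dualLat form M₀) 2 ∧
  smulLat (p : W₀) (mapLat τ (dualLat form M₀)) ≤ M₀ ∧
  SubIdx M₀ (mapLat τ (dualLat form M₀)) 2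

/-- A web pair `(S₀, T₀)` for an admissible lattice `M₀`:
`pM₀^∨ ⊂¹ S₀ ⊂¹ M₀ ⊂¹ T₀ ⊂¹ M₀^∨`, `pτ(T₀^∨) ⊆ S₀ ⊆ τ(T₀^∨)` and
`pτ(S₀^∨) ⊆ T₀ ⊆ τ(S₀^∨)`.  Web pairs for `M₀` are the points of the fiber over `M₀`
of the projection from Iwahori level `ℳ_Iw(𝔽)` to `ℳ(𝔽)`. -/
def IsWebPair (p : ℕ) (form : N₀ →ₗ[K₀] N₀ →ₗ[K₀] K₀)
    {σ₀ : W₀ ≃+* W₀} (τ : N₀ →ₛₗ[(σ₀ : W₀ →+* W₀)] N₀)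
    (M₀ S₀ T₀ : Submodule W₀ N₀) : Prop :=
  IsLattice (K₀ := K₀) S₀ ∧ IsLattice (K₀ := K₀) T₀ ∧
  SubIdx (smulLat (p : W₀) (dualLat form M₀)) S₀ 1 ∧
  SubIdx S₀ M₀ 1 ∧ SubIdx M₀ T₀ 1 ∧ SubIdx T₀ (dualLat form M₀) 1 ∧
  smulLat (p : W₀) (mapLat τ (dualLat form T₀)) ≤ S₀ ∧
  S₀ ≤ mapLat τ (dualLat form T₀) ∧
  smulLat (p : W₀) (mapLat τ (dualLat form S₀)) ≤ T₀ ∧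
  T₀ ≤ mapLat τ (dualLat form S₀)


/-! ### Auxiliary order-theoretic lemmas -/

section OrderAux

open Order Set

variable {α : Type*} [PartialOrder α]

lemma chain_le_krullDim {n : ℕ} (f : Fin (n + 1) → α) (hf : StrictMono f) :
    (n : WithBot ℕ∞) ≤ Order.krullDim α := by
  have := LTSeries.length_le_krullDim (⟨n, f, fun i => hf (Fin.castSucc_lt_succ (i := i))⟩ : LTSeries α)
  exact_mod_cast this

lemma krullDim_Icc_self (a : α) : Order.krullDim (Set.Icc a a) = 0 := by
  have hs : Subsingleton (Set.Icc a a) := by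
    constructor
    rintro ⟨x, hx1, hx2⟩ ⟨y, hy1, hy2⟩
    have : x = y := le_antisymm (le_trans hx2 hy1) (le_trans hy2 hx1)
    exact Subtype.ext this
  have hn : Nonempty (Set.Icc a a) := ⟨⟨a, le_refl a, le_refl a⟩⟩
  exact le_antisymm Order.krullDim_nonpos_of_subsingleton Order.krullDim_nonneg

lemma one_le_krullDim_Icc {a b : α} (h : a < b) :
    (1 : WithBot ℕ∞) ≤ Order.krullDim (Set.Icc a b) := by
  have hf : StrictMono (![⟨a, le_refl a, h.le⟩, ⟨b, h.le, le_refl b⟩] :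
      Fin 2 → Set.Icc a b) := by
    rw [Fin.strictMono_iff_lt_succ]
    intro i
    fin_cases i
    exact h
  simpa using chain_le_krullDim _ hf

lemma krullDim_Icc_of_covBy {a b : α} (h : a ⋖ b) :
    Order.krullDim (Set.Icc a b) = 1 := by
  refine le_antisymm ?_ (one_le_krullDim_Icc h.lt)
  rw [Order.krullDim]
  apply iSup_le
  intro q
  have hq : q.length ≤ 1 := by
    by_contra hq
    push_neg at hq
    have h2 : (2 : ℕ) ≤ q.length := hq
    set i0 : Fin (q.length + 1) := ⟨0, by omega⟩
    set i1 : Fin (q.length + 1) := ⟨1, by omega⟩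
    set i2 : Fin (q.length + 1) := ⟨2, by omega⟩
    have h01 : q.toFun i0 < q.toFun i1 := q.strictMono (by simp [i0, i1, Fin.lt_def])
    have h12 : q.toFun i1 < q.toFun i2 := q.strictMono (by simp [i1, i2, Fin.lt_def])
    have c01 : (q.toFun i0 : α) < (q.toFun i1 : α) := h01
    have c12 : (q.toFun i1 : α) < (q.toFun i2 : α) := h12
    have hm := (q.toFun i1).2
    rcases h.eq_or_eq hm.1 hm.2 with h1 | h1
    · rw [h1] at c01
      exact absurd (lt_of_le_of_lt (q.toFun i0).2.1 c01) (lt_irrefl a)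
    · rw [h1] at c12
      exact absurd (lt_of_lt_of_le c12 (q.toFun i2).2.2) (lt_irrefl b)
  exact_mod_cast hq

end OrderAux
section Main

open Order Set

variable {W₀ : Type*} [CommRing W₀]
variable {K₀ : Type*} [Field K₀] [Algebra W₀ K₀]
variable {N₀ : Type*} [AddCommGroup N₀] [Module K₀ N₀] [Module W₀ N₀] [IsScalarTower W₀ K₀ N₀]

lemma mem_smulLat {c : W₀} {A : Submodule W₀ N₀} {x : N₀} :
    x ∈ smulLat c A ↔ ∃ m ∈ A, c • m = x := Iff.rfl

lemma mem_mapLat {σ₀ : W₀ ≃+* W₀} {g : N₀ →ₛₗ[(σ₀ : W₀ →+* W₀)] N₀} {A : Submodule W₀ N₀}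
    {x : N₀} : x ∈ mapLat g A ↔ ∃ m ∈ A, g m = x := Iff.rfl

/-- Preimage of a submodule under a semilinear map. -/
def preLat {σ₀ : W₀ ≃+* W₀} (g : N₀ →ₛₗ[(σ₀ : W₀ →+* W₀)] N₀) (A : Submodule W₀ N₀) :
    Submodule W₀ N₀ where
  carrier := ⇑g ⁻¹' A
  zero_mem' := by simp only [Set.mem_preimage, map_zero, SetLike.mem_coe]; exact A.zero_mem
  add_mem' := by
    intro a b ha hb
    simp only [Set.mem_preimage, map_add, SetLike.mem_coe] at *
    exact A.add_mem ha hb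
  smul_mem' := by
    intro c x hx
    simp only [Set.mem_preimage, map_smulₛₗ, SetLike.mem_coe] at *
    exact A.smul_mem _ hx

lemma mem_preLat {σ₀ : W₀ ≃+* W₀} {g : N₀ →ₛₗ[(σ₀ : W₀ →+* W₀)] N₀} {A : Submodule W₀ N₀}
    {x : N₀} : x ∈ preLat g A ↔ g x ∈ A := Iff.rfl

/-- `mapLat τ` as an order isomorphism of the submodule lattice. -/
def tIso {σ₀ : W₀ ≃+* W₀} (τ : N₀ →ₛₗ[(σ₀ : W₀ →+* W₀)] N₀) (hbij : Function.Bijective τ) :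
    Submodule W₀ N₀ ≃o Submodule W₀ N₀ where
  toFun := mapLat τ
  invFun := preLat τ
  left_inv := by
    intro A
    ext x
    rw [mem_preLat, mem_mapLat]
    constructor
    · rintro ⟨m, hm, hmx⟩; rwa [hbij.1 hmx] at hm
    · intro hx; exact ⟨x, hx, rfl⟩
  right_inv := by
    intro A
    ext x
    rw [mem_mapLat]
    constructor
    · rintro ⟨m, hm, rfl⟩; exact hm
    · intro hx
      obtain ⟨y, rfl⟩ := hbij.2 x
      exact ⟨y, hx, rfl⟩
  map_rel_iff' := by
    intro A B
    constructor
    · intro h x hx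
      obtain ⟨m, hm, hmx⟩ := h (show τ x ∈ mapLat τ A from ⟨x, hx, rfl⟩)
      rwa [hbij.1 hmx] at hm
    · rintro h _ ⟨m, hm, rfl⟩
      exact ⟨m, h hm, rfl⟩

@[simp] lemma tIso_apply {σ₀ : W₀ ≃+* W₀} (τ : N₀ →ₛₗ[(σ₀ : W₀ →+* W₀)] N₀)
    (hbij : Function.Bijective τ) (A : Submodule W₀ N₀) : tIso τ hbij A = mapLat τ A := rfl

/-- Preimage of a submodule under scalar multiplication. -/
def preSmul (c : W₀) (A : Submodule W₀ N₀) : Submodule W₀ N₀ where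
  carrier := {x | c • x ∈ A}
  zero_mem' := by simp only [Set.mem_setOf_eq, smul_zero]; exact A.zero_mem
  add_mem' := by
    intro a b ha hb
    simp only [Set.mem_setOf_eq, smul_add] at *
    exact A.add_mem ha hb
  smul_mem' := by
    intro d x hx
    simp only [Set.mem_setOf_eq] at *
    rw [smul_comm]
    exact A.smul_mem d hx

lemma smul_injective' {q : W₀} (hq : algebraMap W₀ K₀ q ≠ 0) :
    Function.Injective (fun x : N₀ => q • x) := by
  intro x y h
  simp only at h
  rw [← IsScalarTower.algebraMap_smul K₀ q x, ← IsScalarTower.algebraMap_smul K₀ q y] at h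
  exact smul_right_injective N₀ hq h

lemma smul_inv_smul' {q : W₀} (hq : algebraMap W₀ K₀ q ≠ 0) (x : N₀) :
    q • ((algebraMap W₀ K₀ q)⁻¹ • x) = x := by
  rw [← IsScalarTower.algebraMap_smul K₀ q ((algebraMap W₀ K₀ q)⁻¹ • x), smul_smul,
    mul_inv_cancel₀ hq, one_smul]

/-- `smulLat q` as an order isomorphism of the submodule lattice. -/
def pIso (q : W₀) (hq : algebraMap W₀ K₀ q ≠ 0) :
    Submodule W₀ N₀ ≃o Submodule W₀ N₀ where
  toFun := smulLat q
  invFun := preSmul q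
  left_inv := by
    intro A
    ext x
    show q • x ∈ smulLat q A ↔ x ∈ A
    rw [mem_smulLat]
    constructor
    · rintro ⟨m, hm, hmx⟩; rwa [smul_injective' hq hmx] at hm
    · intro hx; exact ⟨x, hx, rfl⟩
  right_inv := by
    intro A
    ext x
    rw [mem_smulLat]
    constructor
    · rintro ⟨m, hm, rfl⟩; exact hm
    · intro hx
      exact ⟨(algebraMap W₀ K₀ q)⁻¹ • x, by
        show q • ((algebraMap W₀ K₀ q)⁻¹ • x) ∈ A
        rwa [smul_inv_smul' hq], smul_inv_smul' hq x⟩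
  map_rel_iff' := by
    intro A B
    constructor
    · intro h x hx
      obtain ⟨m, hm, hmx⟩ := h (show q • x ∈ smulLat q A from ⟨x, hx, rfl⟩)
      rwa [smul_injective' hq hmx] at hm
    · rintro h _ ⟨m, hm, rfl⟩
      exact ⟨m, h hm, rfl⟩

@[simp] lemma pIso_apply (q : W₀) (hq : algebraMap W₀ K₀ q ≠ 0) (A : Submodule W₀ N₀) :
    pIso q hq A = smulLat q A := rfl

lemma relLength_orderIso (f : Submodule W₀ N₀ ≃o Submodule W₀ N₀) (A B : Submodule W₀ N₀) :
    relLength (f A) (f B) = relLength A B := by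
  refine (Order.krullDim_eq_of_orderIso ?_).symm
  refine { toFun := fun x => ⟨f x.1, f.monotone x.2.1, f.monotone x.2.2⟩,
           invFun := fun y => ⟨f.symm y.1, ?_, ?_⟩,
           left_inv := fun x => Subtype.ext (f.symm_apply_apply x.1),
           right_inv := fun y => Subtype.ext (f.apply_symm_apply y.1),
           map_rel_iff' := f.le_iff_le }
  · simpa using f.symm.monotone y.2.1
  · simpa using f.symm.monotone y.2.2

lemma subIdx_one_iff {A B : Submodule W₀ N₀} : SubIdx A B 1 ↔ A ⋖ B := by
  constructor
  · rintro ⟨hle, hlen⟩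
    have hne : A ≠ B := by
      rintro rfl
      rw [relLength, krullDim_Icc_self] at hlen
      norm_num at hlen
    refine ⟨hle.lt_of_ne hne, ?_⟩
    intro c hac hcb
    have hf : StrictMono (![⟨A, le_refl A, hle⟩, ⟨c, hac.le, hcb.le⟩,
        ⟨B, hle, le_refl B⟩] : Fin 3 → Set.Icc A B) := by
      rw [Fin.strictMono_iff_lt_succ]
      intro i
      fin_cases i
      · exact hac
      · exact hcb
    have h2 := chain_le_krullDim _ hf
    rw [relLength] at hlen
    rw [hlen] at h2
    norm_num at h2
  · intro h
    refine ⟨h.le, ?_⟩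
    rw [relLength, krullDim_Icc_of_covBy h]
    norm_num

lemma subIdx_le {A B : Submodule W₀ N₀} {d : ℕ} (h : SubIdx A B d) : A ≤ B := h.1

end Main
section Lattices

open Order Set Submodule

variable {W₀ : Type*} [CommRing W₀]
variable {K₀ : Type*} [Field K₀] [Algebra W₀ K₀]
variable {N₀ : Type*} [AddCommGroup N₀] [Module K₀ N₀] [Module W₀ N₀] [IsScalarTower W₀ K₀ N₀]

lemma fg_of_le [IsDomain W₀] [IsDiscreteValuationRing W₀] {Y Z : Submodule W₀ N₀}
    (hY : Y.FG) (hZY : Z ≤ Y) : Z.FG := by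
  haveI := isNoetherian_of_fg_of_noetherian Y hY
  have h1 : (Submodule.comap Y.subtype Z).FG := IsNoetherian.noetherian _
  have h2 : Submodule.map Y.subtype (Submodule.comap Y.subtype Z) = Z := by
    rw [Submodule.map_comap_subtype]
    exact inf_eq_right.mpr hZY
  rw [← h2]
  exact h1.map _

lemma isLattice_sup {A B : Submodule W₀ N₀} (hA : IsLattice (K₀ := K₀) A)
    (hB : IsLattice (K₀ := K₀) B) : IsLattice (K₀ := K₀) (A ⊔ B) :=
  ⟨hA.1.sup hB.1, top_unique <| by
    rw [← hA.2]
    exact Submodule.span_mono (by exact_mod_cast le_sup_left)⟩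

lemma isLattice_of_between [IsDomain W₀] [IsDiscreteValuationRing W₀]
    {X Z Y : Submodule W₀ N₀} (hX : IsLattice (K₀ := K₀) X) (hY : IsLattice (K₀ := K₀) Y)
    (h1 : X ≤ Z) (h2 : Z ≤ Y) : IsLattice (K₀ := K₀) Z :=
  ⟨fg_of_le hY.1 h2, top_unique <| by
    rw [← hX.2]
    exact Submodule.span_mono (by exact_mod_cast h1)⟩

/-- Scalar multiplication as a linear map. -/
def smulMap (q : W₀) : N₀ →ₗ[W₀] N₀ where
  toFun := fun x => q • x
  map_add' := smul_add q
  map_smul' := fun c x => smul_comm q c x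

lemma smulLat_eq_map (q : W₀) (A : Submodule W₀ N₀) :
    smulLat q A = Submodule.map (smulMap q) A := by
  ext x
  rw [mem_smulLat]
  simp only [Submodule.mem_map]
  rfl

lemma mapLat_span {σ₀ : W₀ ≃+* W₀} (τ : N₀ →ₛₗ[(σ₀ : W₀ →+* W₀)] N₀) (s : Set N₀) :
    mapLat τ (Submodule.span W₀ s) = Submodule.span W₀ (⇑τ '' s) := by
  apply le_antisymm
  · rintro x ⟨m, hm, rfl⟩
    refine Submodule.span_induction
      (p := fun m _ => τ m ∈ Submodule.span W₀ (⇑τ '' s)) ?_ ?_ ?_ ?_ hm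
    · intro w hw
      exact Submodule.subset_span ⟨w, hw, rfl⟩
    · show τ 0 ∈ Submodule.span W₀ (⇑τ '' s)
      rw [map_zero]; exact Submodule.zero_mem _
    · intro w v _ _ hw hv
      show τ (w + v) ∈ Submodule.span W₀ (⇑τ '' s)
      rw [map_add]; exact Submodule.add_mem _ hw hv
    · intro c w _ hw
      show τ (c • w) ∈ Submodule.span W₀ (⇑τ '' s)
      rw [map_smulₛₗ]; exact Submodule.smul_mem _ _ hw
  · rw [Submodule.span_le]
    rintro x ⟨m, hm, rfl⟩
    exact ⟨m, Submodule.subset_span hm, rfl⟩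

lemma isLattice_smulLat {q : W₀} (hq : algebraMap W₀ K₀ q ≠ 0)
    {A : Submodule W₀ N₀} (hA : IsLattice (K₀ := K₀) A) :
    IsLattice (K₀ := K₀) (smulLat q A) := by
  constructor
  · rw [smulLat_eq_map]
    exact hA.1.map _
  · apply top_unique
    rw [← hA.2, Submodule.span_le]
    intro x hx
    have hmem : q • x ∈ smulLat q A := ⟨x, hx, rfl⟩
    have hxx : x = (algebraMap W₀ K₀ q)⁻¹ • (q • x) := by
      rw [← IsScalarTower.algebraMap_smul K₀ q x, smul_smul, inv_mul_cancel₀ hq, one_smul]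
    rw [hxx]
    exact Submodule.smul_mem _ _ (Submodule.subset_span hmem)

lemma isLattice_mapLat {σ₀ : W₀ ≃+* W₀} {τ : N₀ →ₛₗ[(σ₀ : W₀ →+* W₀)] N₀}
    (hbij : Function.Bijective τ) (σ : K₀ ≃+* K₀)
    (hτ_semilinear : ∀ (a : K₀) (x : N₀), τ (a • x) = σ a • τ x)
    {A : Submodule W₀ N₀} (hA : IsLattice (K₀ := K₀) A) :
    IsLattice (K₀ := K₀) (mapLat τ A) := by
  constructor
  · obtain ⟨t, ht⟩ := hA.1
    rw [← ht, mapLat_span]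
    rw [Submodule.fg_def]
    exact ⟨_, (t.finite_toSet.image _), rfl⟩
  · apply top_unique
    intro y _
    obtain ⟨z, rfl⟩ := hbij.2 y
    have hz : z ∈ Submodule.span K₀ (A : Set N₀) := by rw [hA.2]; exact Submodule.mem_top
    refine Submodule.span_induction
      (p := fun z _ => τ z ∈ Submodule.span K₀ ((mapLat τ A : Submodule W₀ N₀) : Set N₀))
      ?_ ?_ ?_ ?_ hz
    · intro w hw
      exact Submodule.subset_span ⟨w, hw, rfl⟩
    · show τ 0 ∈ Submodule.span K₀ ((mapLat τ A : Submodule W₀ N₀) : Set N₀)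
      rw [map_zero]; exact Submodule.zero_mem _
    · intro w v _ _ hw hv
      show τ (w + v) ∈ Submodule.span K₀ ((mapLat τ A : Submodule W₀ N₀) : Set N₀)
      rw [map_add]; exact Submodule.add_mem _ hw hv
    · intro c w _ hw
      show τ (c • w) ∈ Submodule.span K₀ ((mapLat τ A : Submodule W₀ N₀) : Set N₀)
      rw [hτ_semilinear]; exact Submodule.smul_mem _ _ hw

lemma IsLattice.exists_basis [IsDomain W₀] [IsDiscreteValuationRing W₀] [IsFractionRing W₀ K₀]
    {X : Submodule W₀ N₀} (hX : IsLattice (K₀ := K₀) X) :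
    ∃ (n : ℕ) (b : Module.Basis (Fin n) K₀ N₀), X = Submodule.span W₀ (Set.range (⇑b)) := by
  haveI : Module.Finite W₀ ↥X := Module.Finite.iff_fg.mpr hX.1
  haveI : NoZeroSMulDivisors W₀ ↥X := by
    refine ⟨fun {c} {x} h => ?_⟩
    by_cases hc : c = 0
    · exact Or.inl hc
    · right
      have hx : c • (x : N₀) = 0 := by
        have := congrArg (Subtype.val) h
        simpa using this
      rw [← IsScalarTower.algebraMap_smul K₀ c (x : N₀)] at hx
      rcases smul_eq_zero.mp hx with h1 | h1
      · exact absurd ((map_eq_zero_iff _ (IsFractionRing.injective W₀ K₀)).mp h1) hc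
      · exact Subtype.ext h1
  haveI : Module.Free W₀ ↥X := Module.free_of_finite_type_torsion_free'
  set ι := Module.Free.ChooseBasisIndex W₀ ↥X with hι
  let b₀ : Module.Basis ι W₀ ↥X := Module.Free.chooseBasis W₀ ↥X
  let v : ι → N₀ := fun i => (b₀ i : N₀)
  have hXspan : X = Submodule.span W₀ (Set.range v) := by
    conv_lhs => rw [← Submodule.map_subtype_top X, ← b₀.span_eq]
    rw [Submodule.map_span, ← Set.range_comp]
    rfl
  have hli₀ : LinearIndependent W₀ v := b₀.linearIndependent.map' X.subtype X.ker_subtype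
  have hli : LinearIndependent K₀ v := hli₀.localization K₀ (nonZeroDivisors W₀)
  have hsp : ⊤ ≤ Submodule.span K₀ (Set.range v) := by
    rw [← hX.2, hXspan, Submodule.span_span_of_tower]
  let b₁ : Module.Basis ι K₀ N₀ := Module.Basis.mk hli hsp
  refine ⟨Fintype.card ι, b₁.reindex (Fintype.equivFin ι), ?_⟩
  rw [Module.Basis.range_reindex, hXspan]
  congr 1
  rw [show ⇑b₁ = v from Module.Basis.coe_mk hli hsp]

end Lattices
section Duals

open Order Set Submodule

variable {W₀ : Type*} [CommRing W₀]
variable {K₀ : Type*} [Field K₀] [Algebra W₀ K₀]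
variable {N₀ : Type*} [AddCommGroup N₀] [Module K₀ N₀] [Module W₀ N₀] [IsScalarTower W₀ K₀ N₀]
variable (form : N₀ →ₗ[K₀] N₀ →ₗ[K₀] K₀)

lemma mem_dualLat {A : Submodule W₀ N₀} {x : N₀} :
    x ∈ dualLat form A ↔ ∀ y ∈ A, form x y ∈ (algebraMap W₀ K₀).range := Iff.rfl

lemma dualLat_anti {A B : Submodule W₀ N₀} (h : A ≤ B) : dualLat form B ≤ dualLat form A :=
  fun _ hx y hy => hx y (h hy)

lemma dualLat_sup (A B : Submodule W₀ N₀) :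
    dualLat form (A ⊔ B) = dualLat form A ⊓ dualLat form B := by
  apply le_antisymm
  · exact le_inf (dualLat_anti form le_sup_left) (dualLat_anti form le_sup_right)
  · rintro x ⟨h1, h2⟩ y hy
    obtain ⟨a, ha, b, hb, rfl⟩ := Submodule.mem_sup.mp hy
    rw [map_add]
    exact add_mem (h1 a ha) (h2 b hb)

lemma dualLat_eq_dualSubmodule (A : Submodule W₀ N₀) :
    dualLat form A = LinearMap.BilinForm.dualSubmodule form A := by
  ext x
  rw [mem_dualLat, LinearMap.BilinForm.mem_dualSubmodule]
  refine forall₂_congr fun y _ => ?_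
  rw [Submodule.mem_one]
  exact Iff.rfl

lemma form_skew (halt : ∀ x, form x x = 0) (x y : N₀) : form y x = - form x y := by
  have h := halt (x + y)
  simp only [map_add, LinearMap.add_apply, halt x, halt y] at h
  linear_combination h

lemma dualSubmodule_flip_eq (halt : ∀ x, form x x = 0) (A : Submodule W₀ N₀) :
    LinearMap.BilinForm.dualSubmodule (LinearMap.BilinForm.flip form) A
      = LinearMap.BilinForm.dualSubmodule form A := by
  ext x
  rw [LinearMap.BilinForm.mem_dualSubmodule, LinearMap.BilinForm.mem_dualSubmodule]
  refine forall₂_congr fun y hy => ?_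
  rw [LinearMap.BilinForm.flip_apply, form_skew form halt]
  exact neg_mem_iff

lemma dualLat_dualLat [IsDomain W₀] [IsDiscreteValuationRing W₀] [IsFractionRing W₀ K₀]
    (halt : ∀ x, form x x = 0) (hnondeg : ∀ x, (∀ y, form x y = 0) → x = 0)
    {X : Submodule W₀ N₀} (hX : IsLattice (K₀ := K₀) X) :
    dualLat form (dualLat form X) = X := by
  obtain ⟨n, b, rfl⟩ := hX.exists_basis
  have hnd : LinearMap.BilinForm.Nondegenerate form := by
    haveI := Module.Finite.of_basis b
    exact LinearMap.BilinForm.Nondegenerate.ofSeparatingLeft hnondeg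
  rw [dualLat_eq_dualSubmodule, dualLat_eq_dualSubmodule]
  have h2 := LinearMap.BilinForm.dualSubmodule_dualSubmodule_flip_of_basis
    (R := W₀) form hnd b
  rwa [dualSubmodule_flip_eq form halt] at h2

lemma isLattice_dualLat [IsDomain W₀] [IsDiscreteValuationRing W₀] [IsFractionRing W₀ K₀]
    (hnondeg : ∀ x, (∀ y, form x y = 0) → x = 0)
    {X : Submodule W₀ N₀} (hX : IsLattice (K₀ := K₀) X) :
    IsLattice (K₀ := K₀) (dualLat form X) := by
  classical
  obtain ⟨n, b, rfl⟩ := hX.exists_basis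
  have hnd : LinearMap.BilinForm.Nondegenerate form := by
    haveI := Module.Finite.of_basis b
    exact LinearMap.BilinForm.Nondegenerate.ofSeparatingLeft hnondeg
  rw [dualLat_eq_dualSubmodule,
    LinearMap.BilinForm.dualSubmodule_span_of_basis (R := W₀) form hnd b]
  constructor
  · rw [Submodule.fg_def]
    exact ⟨_, Set.finite_range _, rfl⟩
  · rw [Submodule.span_span_of_tower]
    exact Module.Basis.span_eq _

variable {σ : K₀ ≃+* K₀} {σ₀ : W₀ ≃+* W₀} {τ : N₀ →ₛₗ[(σ₀ : W₀ →+* W₀)] N₀}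

lemma dualLat_mapLat (hσ : ∀ c : W₀, algebraMap W₀ K₀ (σ₀ c) = σ (algebraMap W₀ K₀ c))
    (hbij : Function.Bijective τ)
    (hτ_form : ∀ x y, form (τ x) (τ y) = σ (form x y)) (A : Submodule W₀ N₀) :
    dualLat form (mapLat τ A) = mapLat τ (dualLat form A) := by
  have hrange : ∀ z : K₀, σ z ∈ (algebraMap W₀ K₀).range ↔ z ∈ (algebraMap W₀ K₀).range := by
    intro z
    constructor
    · rintro ⟨r, hr⟩
      refine ⟨σ₀.symm r, ?_⟩
      have := hσ (σ₀.symm r)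
      rw [RingEquiv.apply_symm_apply] at this
      rw [this] at hr
      exact σ.injective hr
    · rintro ⟨r, rfl⟩
      exact ⟨σ₀ r, hσ r⟩
  ext z
  rw [mem_dualLat, mem_mapLat]
  constructor
  · intro hz
    obtain ⟨y, rfl⟩ := hbij.2 z
    refine ⟨y, fun x hx => ?_, rfl⟩
    have := hz (τ x) ⟨x, hx, rfl⟩
    rw [hτ_form] at this
    exact (hrange _).mp this
  · rintro ⟨y, hy, rfl⟩ w hw
    obtain ⟨x, hx, rfl⟩ := hw
    rw [hτ_form]
    exact (hrange _).mpr (hy x hx)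

lemma smulLat_dualLat_smulLat {q : W₀} (hq : algebraMap W₀ K₀ q ≠ 0) (A : Submodule W₀ N₀) :
    smulLat q (dualLat form (smulLat q A)) = dualLat form A := by
  have hform1 : ∀ (y x : N₀), form y (q • x) = algebraMap W₀ K₀ q * form y x := by
    intro y x
    rw [← IsScalarTower.algebraMap_smul K₀ q x, map_smul, smul_eq_mul]
  have hform2 : ∀ (y x : N₀), form (q • y) x = algebraMap W₀ K₀ q * form y x := by
    intro y x
    rw [← IsScalarTower.algebraMap_smul K₀ q y, map_smul, LinearMap.smul_apply, smul_eq_mul]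
  ext z
  rw [mem_smulLat]
  constructor
  · rintro ⟨y, hy, rfl⟩ x hx
    rw [hform2, ← hform1]
    exact hy (q • x) ⟨x, hx, rfl⟩
  · intro hz
    refine ⟨(algebraMap W₀ K₀ q)⁻¹ • z, ?_, smul_inv_smul' hq z⟩
    rintro w ⟨x, hx, rfl⟩
    have h1 : form ((algebraMap W₀ K₀ q)⁻¹ • z) (q • x) = form z x := by
      rw [hform1, LinearMap.map_smul, LinearMap.smul_apply, smul_eq_mul, ← mul_assoc,
        mul_inv_cancel₀ hq, one_mul]
    rw [h1]
    exact hz x hx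

end Duals
section ChainBound

open Order Set Submodule

variable {W₀ : Type*} [CommRing W₀] [IsDomain W₀] [IsDiscreteValuationRing W₀]
variable {K₀ : Type*} [Field K₀] [Algebra W₀ K₀] [IsFractionRing W₀ K₀]
variable {N₀ : Type*} [AddCommGroup N₀] [Module K₀ N₀] [Module W₀ N₀] [IsScalarTower W₀ K₀ N₀]

/-- No strictly increasing six-term chain of submodules between `qX` and `X`
for a lattice `X` in a four-dimensional space. -/
lemma chain_bound (hdim : Module.finrank K₀ N₀ = 4) {q : W₀} (hq_irr : Irreducible q)
    {X : Submodule W₀ N₀} (hX : IsLattice (K₀ := K₀) X) {g : Fin 6 → Submodule W₀ N₀}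
    (hg : StrictMono g) (h0 : smulLat q X ≤ g 0) (h5 : g 5 ≤ X) : False := by
  classical
  obtain ⟨n, b, hXb⟩ := hX.exists_basis
  have hn : n = 4 := by
    have h := Module.finrank_eq_card_basis b
    rw [hdim, Fintype.card_fin] at h
    omega
  haveI hmax : (Ideal.span {q}).IsMaximal := PrincipalIdealRing.isMaximal_of_irreducible hq_irr
  letI : Field (W₀ ⧸ Ideal.span {q}) := Ideal.Quotient.field _
  set π : W₀ →+* W₀ ⧸ Ideal.span {q} := Ideal.Quotient.mk (Ideal.span {q}) with hπ
  -- the image of a submodule in the reduction of `X` mod `q`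
  let U : Submodule W₀ N₀ → Submodule (W₀ ⧸ Ideal.span {q}) (Fin n → W₀ ⧸ Ideal.span {q}) :=
    fun Y =>
    { carrier := {v | ∃ c : Fin n → W₀, (∀ j, π (c j) = v j) ∧ (∑ j, c j • b j) ∈ Y}
      zero_mem' := ⟨0, by simp, by simp⟩
      add_mem' := by
        rintro v w ⟨c, hc, hcy⟩ ⟨d, hd, hdy⟩
        refine ⟨c + d, fun j => by simp [hc j, hd j], ?_⟩
        have : (∑ j, (c + d) j • b j) = (∑ j, c j • b j) + (∑ j, d j • b j) := by
          rw [← Finset.sum_add_distrib]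
          refine Finset.sum_congr rfl fun j _ => ?_
          simp [add_smul]
        rw [this]
        exact Submodule.add_mem _ hcy hdy
      smul_mem' := by
        rintro s v ⟨c, hc, hcy⟩
        obtain ⟨r, rfl⟩ := Ideal.Quotient.mk_surjective s
        refine ⟨r • c, fun j => by simp [← hc j, hπ], ?_⟩
        have : (∑ j, (r • c) j • b j) = r • (∑ j, c j • b j) := by
          rw [Finset.smul_sum]
          refine Finset.sum_congr rfl fun j _ => ?_
          simp [smul_smul]
        rw [this]
        exact Submodule.smul_mem _ _ hcy }
  have hmemX : ∀ j, b j ∈ X := by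
    intro j
    rw [hXb]
    exact Submodule.subset_span ⟨j, rfl⟩
  have hUlt : ∀ {Y Z : Submodule W₀ N₀}, smulLat q X ≤ Y → Y < Z → Z ≤ X → U Y < U Z := by
    intro Y Z hY hYZ hZ
    rw [lt_iff_le_and_ne]
    constructor
    · rintro v ⟨c, hc, hcy⟩
      exact ⟨c, hc, hYZ.le hcy⟩
    · intro hUeq
      obtain ⟨y, hyZ, hyY⟩ := SetLike.exists_of_lt hYZ
      obtain ⟨c, hcs⟩ := (mem_span_range_iff_exists_fun W₀).mp (by rw [← hXb]; exact hZ hyZ)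
      have hv : (fun j => π (c j)) ∈ U Z := ⟨c, fun _ => rfl, by rw [hcs]; exact hyZ⟩
      rw [← hUeq] at hv
      obtain ⟨d, hd, hdy⟩ := hv
      have key : ∀ j, ∃ e : W₀, c j - d j = q * e := by
        intro j
        have hz : π (c j - d j) = 0 := by
          rw [map_sub, hd j, sub_self]
        rw [hπ, Ideal.Quotient.eq_zero_iff_mem, Ideal.mem_span_singleton'] at hz
        obtain ⟨e, he⟩ := hz
        exact ⟨e, by rw [← he, mul_comm]⟩
      choose e he using key
      have hsub : y - ∑ j, d j • b j ∈ smulLat q X := by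
        refine ⟨∑ j, e j • b j, Submodule.sum_mem _ (fun j _ => X.smul_mem _ (hmemX j)), ?_⟩
        rw [Finset.smul_sum, ← hcs, ← Finset.sum_sub_distrib]
        refine Finset.sum_congr rfl fun j _ => ?_
        rw [smul_smul, ← sub_smul, ← he j]
      have hy' : y ∈ Y := by
        have h1 : y - ∑ j, d j • b j ∈ Y := hY hsub
        have h2 := Y.add_mem h1 hdy
        simpa using h2
      exact hyY hy'
  have hUr : ∀ i j : Fin 6, i < j → U (g i) < U (g j) := by
    intro i j hij
    exact hUlt (le_trans h0 (hg.monotone (Fin.zero_le i))) (hg hij)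
      (le_trans (hg.monotone (Fin.le_last j)) h5)
  have hfr : ∀ i j : Fin 6, i < j →
      Module.finrank (W₀ ⧸ Ideal.span {q}) (U (g i)) <
        Module.finrank (W₀ ⧸ Ideal.span {q}) (U (g j)) := by
    intro i j hij
    exact Submodule.finrank_lt_finrank_of_lt (hUr i j hij)
  have hb : ∀ i : Fin 6, Module.finrank (W₀ ⧸ Ideal.span {q}) (U (g i)) ≤ n := by
    intro i
    have h1 := Submodule.finrank_le (U (g i))
    rwa [Module.finrank_fin_fun] at h1
  have h01 := hfr 0 1 (by decide)
  have h12 := hfr 1 2 (by decide)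
  have h23 := hfr 2 3 (by decide)
  have h34 := hfr 3 4 (by decide)
  have h45 := hfr 4 5 (by decide)
  have h5' := hb 5
  omega

end ChainBound
section DualCov

open Order Set Submodule

variable {W₀ : Type*} [CommRing W₀] [IsDomain W₀] [IsDiscreteValuationRing W₀]
variable {K₀ : Type*} [Field K₀] [Algebra W₀ K₀] [IsFractionRing W₀ K₀]
variable {N₀ : Type*} [AddCommGroup N₀] [Module K₀ N₀] [Module W₀ N₀] [IsScalarTower W₀ K₀ N₀]
variable (form : N₀ →ₗ[K₀] N₀ →ₗ[K₀] K₀)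

lemma covBy_dualLat (halt : ∀ x, form x x = 0)
    (hnondeg : ∀ x, (∀ y, form x y = 0) → x = 0)
    {X Y : Submodule W₀ N₀} (hX : IsLattice (K₀ := K₀) X) (hY : IsLattice (K₀ := K₀) Y)
    (h : X ⋖ Y) : dualLat form Y ⋖ dualLat form X := by
  constructor
  · refine lt_of_le_of_ne (dualLat_anti form h.lt.le) ?_
    intro heq
    have h2 := congrArg (dualLat form) heq
    rw [dualLat_dualLat form halt hnondeg hY, dualLat_dualLat form halt hnondeg hX] at h2
    exact h.lt.ne h2.symm
  · intro Z hZ1 hZ2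
    have hlatZ : IsLattice (K₀ := K₀) Z :=
      isLattice_of_between (isLattice_dualLat form hnondeg hY)
        (isLattice_dualLat form hnondeg hX) hZ1.le hZ2.le
    have hXZ : X ≤ dualLat form Z := by
      have h3 := dualLat_anti form hZ2.le
      rwa [dualLat_dualLat form halt hnondeg hX] at h3
    have hZY : dualLat form Z ≤ Y := by
      have h3 := dualLat_anti form hZ1.le
      rwa [dualLat_dualLat form halt hnondeg hY] at h3
    rcases h.eq_or_eq hXZ hZY with hh | hh
    · have h4 : Z = dualLat form X := by
        have h5 := congrArg (dualLat form) hh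
        rwa [dualLat_dualLat form halt hnondeg hlatZ] at h5
      exact hZ2.ne h4
    · have h4 : Z = dualLat form Y := by
        have h5 := congrArg (dualLat form) hh
        rwa [dualLat_dualLat form halt hnondeg hlatZ] at h5
      exact hZ1.ne' h4

end DualCov
/-- Let `M₀` be admissible with `M₀ ∩ τ(M₀)` τ-stable but `M₀ + τ(M₀)`
not τ-stable.  Let `T₀` satisfy `M₀ ⊂¹ T₀ ⊂¹ M₀^∨` with `τ(M₀) ⊆ T₀`.  Then
`T₀ = M₀ + τ(M₀)`, and `S₀ := pM₀^∨ + pτ(T₀^∨)` satisfies `pM₀^∨ ⊂¹ S₀ ⊂¹ M₀` and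
`(S₀, T₀)` is a web pair for `M₀`. -/
theorem statement_10
    (p : ℕ) (hp : Nat.Prime p) (hp_odd : p ≠ 2)
    {W₀ : Type*} [CommRing W₀] [IsDomain W₀] [IsDiscreteValuationRing W₀]
    {K₀ : Type*} [Field K₀] [Algebra W₀ K₀] [IsFractionRing W₀ K₀]
    (hp_irr : Irreducible (p : W₀))
    (σ : K₀ ≃+* K₀) (σ₀ : W₀ ≃+* W₀)
    (hσ : ∀ c : W₀, algebraMap W₀ K₀ (σ₀ c) = σ (algebraMap W₀ K₀ c))
    {N₀ : Type*} [AddCommGroup N₀] [Module K₀ N₀] [Module W₀ N₀] [IsScalarTower W₀ K₀ N₀]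
    (hdim : Module.finrank K₀ N₀ = 4)
    (form : N₀ →ₗ[K₀] N₀ →ₗ[K₀] K₀)
    (halt : ∀ x, form x x = 0)
    (hnondeg : ∀ x, (∀ y, form x y = 0) → x = 0)
    (τ : N₀ →ₛₗ[(σ₀ : W₀ →+* W₀)] N₀)
    (hτ_bij : Function.Bijective τ)
    (hτ_semilinear : ∀ (a : K₀) (x : N₀), τ (a • x) = σ a • τ x)
    (hτ_form : ∀ x y, form (τ x) (τ y) = σ (form x y))
    (M₀ : Submodule W₀ N₀) (hM₀ : IsAdmissible p form τ M₀)
    (h_inf_stable : mapLat τ (M₀ ⊓ mapLat τ M₀) = M₀ ⊓ mapLat τ M₀)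
    (h_sup_not_stable : mapLat τ (M₀ ⊔ mapLat τ M₀) ≠ M₀ ⊔ mapLat τ M₀)
    (T₀ : Submodule W₀ N₀)
    (hT₁ : SubIdx M₀ T₀ 1) (hT₂ : SubIdx T₀ (dualLat form M₀) 1)
    (hτM_le : mapLat τ M₀ ≤ T₀) :
    T₀ = M₀ ⊔ mapLat τ M₀ ∧
    SubIdx (smulLat (p : W₀) (dualLat form M₀))
      (smulLat (p : W₀) (dualLat form M₀) ⊔ smulLat (p : W₀) (mapLat τ (dualLat form T₀)))
      1 ∧
    SubIdx
      (smulLat (p : W₀) (dualLat form M₀) ⊔ smulLat (p : W₀) (mapLat τ (dualLat form T₀)))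
      M₀ 1 ∧
    IsWebPair p form τ M₀
      (smulLat (p : W₀) (dualLat form M₀) ⊔ smulLat (p : W₀) (mapLat τ (dualLat form T₀)))
      T₀ := by
  classical
  obtain ⟨hlatM, h1, h2, h3, h4⟩ := hM₀
  have hq : algebraMap W₀ K₀ ((p : ℕ) : W₀) ≠ 0 := fun h =>
    hp_irr.ne_zero ((map_eq_zero_iff _ (IsFractionRing.injective W₀ K₀)).mp h)
  -- transport helpers
  have hmono : ∀ {X Y : Submodule W₀ N₀}, X ≤ Y → mapLat τ X ≤ mapLat τ Y :=
    fun {X Y} h => (tIso τ hτ_bij).monotone h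
  have hPmono : ∀ {X Y : Submodule W₀ N₀},
      X ≤ Y → smulLat ((p : ℕ) : W₀) X ≤ smulLat ((p : ℕ) : W₀) Y :=
    fun {X Y} h => (pIso ((p : ℕ) : W₀) hq).monotone h
  have hτsup : ∀ X Y : Submodule W₀ N₀, mapLat τ (X ⊔ Y) = mapLat τ X ⊔ mapLat τ Y :=
    fun X Y => (tIso τ hτ_bij).map_sup X Y
  have hτinf : ∀ X Y : Submodule W₀ N₀, mapLat τ (X ⊓ Y) = mapLat τ X ⊓ mapLat τ Y :=
    fun X Y => (tIso τ hτ_bij).map_inf X Y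
  have hPsup : ∀ X Y : Submodule W₀ N₀, smulLat ((p : ℕ) : W₀) (X ⊔ Y)
      = smulLat ((p : ℕ) : W₀) X ⊔ smulLat ((p : ℕ) : W₀) Y :=
    fun X Y => (pIso ((p : ℕ) : W₀) hq).map_sup X Y
  have hPinf : ∀ X Y : Submodule W₀ N₀, smulLat ((p : ℕ) : W₀) (X ⊓ Y)
      = smulLat ((p : ℕ) : W₀) X ⊓ smulLat ((p : ℕ) : W₀) Y :=
    fun X Y => (pIso ((p : ℕ) : W₀) hq).map_inf X Y
  have hPinj : ∀ {X Y : Submodule W₀ N₀},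
      smulLat ((p : ℕ) : W₀) X = smulLat ((p : ℕ) : W₀) Y → X = Y :=
    fun {X Y} h => (pIso ((p : ℕ) : W₀) hq).injective h
  have hPle : ∀ {X Y : Submodule W₀ N₀},
      smulLat ((p : ℕ) : W₀) X ≤ smulLat ((p : ℕ) : W₀) Y ↔ X ≤ Y :=
    fun {X Y} => (pIso ((p : ℕ) : W₀) hq).le_iff_le
  have hcomm : ∀ X : Submodule W₀ N₀,
      mapLat τ (smulLat ((p : ℕ) : W₀) X) = smulLat ((p : ℕ) : W₀) (mapLat τ X) := by
    intro X
    ext x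
    constructor
    · rintro ⟨m, ⟨m', hm', rfl⟩, rfl⟩
      exact ⟨τ m', ⟨m', hm', rfl⟩, by rw [map_smulₛₗ, map_natCast]⟩
    · rintro ⟨m, ⟨m', hm', rfl⟩, rfl⟩
      exact ⟨((p : ℕ) : W₀) • m', ⟨m', hm', rfl⟩, by rw [map_smulₛₗ, map_natCast]⟩
  have hDD : ∀ {X : Submodule W₀ N₀}, IsLattice (K₀ := K₀) X →
      dualLat form (dualLat form X) = X :=
    fun {X} hX => dualLat_dualLat form halt hnondeg hX
  have hDτ : ∀ X : Submodule W₀ N₀,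
      dualLat form (mapLat τ X) = mapLat τ (dualLat form X) :=
    dualLat_mapLat form hσ hτ_bij hτ_form
  have hPDP : ∀ X : Submodule W₀ N₀,
      smulLat ((p : ℕ) : W₀) (dualLat form (smulLat ((p : ℕ) : W₀) X)) = dualLat form X :=
    smulLat_dualLat_smulLat form hq
  -- abbreviations
  set A' := dualLat form M₀ with hA'def
  set B := mapLat τ M₀ with hBdef
  set B' := mapLat τ A' with hB'def
  set C := mapLat τ B with hCdef
  set C' := mapLat τ B' with hC'def
  -- lattices
  have hlatB : IsLattice (K₀ := K₀) B := by
    rw [hBdef]; exact isLattice_mapLat hτ_bij σ hτ_semilinear hlatM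
  have hlatA' : IsLattice (K₀ := K₀) A' := by
    rw [hA'def]; exact isLattice_dualLat form hnondeg hlatM
  have hlatB' : IsLattice (K₀ := K₀) B' := by
    rw [hB'def]; exact isLattice_mapLat hτ_bij σ hτ_semilinear hlatA'
  have hlatC : IsLattice (K₀ := K₀) C := by
    rw [hCdef]; exact isLattice_mapLat hτ_bij σ hτ_semilinear hlatB
  have hlatC' : IsLattice (K₀ := K₀) C' := by
    rw [hC'def]; exact isLattice_mapLat hτ_bij σ hτ_semilinear hlatB'
  -- duals
  have hdualB : dualLat form B = B' := by rw [hBdef, hB'def, hA'def, hDτ]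
  have hdualC : dualLat form C = C' := by rw [hCdef, hDτ, hdualB, hC'def]
  have hDA' : dualLat form A' = M₀ := by rw [hA'def]; exact hDD hlatM
  have hDB' : dualLat form B' = B := by rw [← hdualB]; exact hDD hlatB
  -- admissibility facts (h1 : smulLat p A' ≤ M₀, h3 : smulLat p B' ≤ M₀ after folding)
  have h3' : smulLat ((p : ℕ) : W₀) B' ≤ M₀ := h3
  have hMA' : M₀ ≤ A' := h2.1
  have hMB' : M₀ ≤ B' := h4.1
  have h1B : smulLat ((p : ℕ) : W₀) B' ≤ B := by
    have h := hmono h1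
    rwa [hcomm, ← hB'def, ← hBdef] at h
  have h3B : smulLat ((p : ℕ) : W₀) C' ≤ B := by
    have h := hmono h3'
    rwa [hcomm, ← hC'def, ← hBdef] at h
  have hBB' : B ≤ B' := by
    have h := hmono hMA'
    rwa [← hBdef, ← hB'def] at h
  have hBC' : B ≤ C' := by
    have h := hmono hMB'
    rwa [← hBdef, ← hC'def] at h
  -- Step 1 : T₀ = M₀ ⊔ B
  have hcATT : M₀ ⋖ T₀ := subIdx_one_iff.mp hT₁
  have hT0 : T₀ = M₀ ⊔ B := by
    rcases hcATT.eq_or_eq (le_sup_left : M₀ ≤ M₀ ⊔ B)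
        (sup_le hcATT.lt.le hτM_le) with h | h
    · exfalso
      have hBM : B ≤ M₀ := by
        rw [← h]; exact le_sup_right
      have hIB : M₀ ⊓ B = B := inf_eq_right.mpr hBM
      have hCB : mapLat τ B = B := by
        have h5 := h_inf_stable
        rwa [hIB] at h5
      have hBne : B ≠ M₀ := by
        intro hBeq
        apply h_sup_not_stable
        rw [hBeq, sup_idem, ← hBdef]
        exact hBeq
      have hBlt : B < M₀ := lt_of_le_of_ne hBM hBne
      have hrel := relLength_orderIso (tIso τ hτ_bij) B M₀
      have hrel2 : relLength (mapLat τ B) (mapLat τ M₀) = relLength B M₀ := hrel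
      rw [hCB, ← hBdef] at hrel2
      rw [relLength, relLength, krullDim_Icc_self] at hrel2
      have hge := one_le_krullDim_Icc hBlt
      rw [← hrel2] at hge
      norm_num at hge
    · exact h.symm
  -- covering relations
  have hcAT : M₀ ⋖ M₀ ⊔ B := by rw [← hT0]; exact hcATT
  have hcTA' : M₀ ⊔ B ⋖ A' := by
    have h := subIdx_one_iff.mp hT₂
    rwa [hT0] at h
  have hIcovB : M₀ ⊓ B ⋖ B := inf_covBy_of_covBy_sup_left hcAT
  have hIcovM : M₀ ⊓ B ⋖ M₀ := by
    apply (apply_covBy_apply_iff (tIso τ hτ_bij) (a := M₀ ⊓ B) (b := M₀)).mp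
    show mapLat τ (M₀ ⊓ B) ⋖ mapLat τ M₀
    rw [h_inf_stable, ← hBdef]
    exact hIcovB
  have hBcovT : B ⋖ M₀ ⊔ B := covBy_sup_of_inf_covBy_left hIcovM
  have hBcovBC : B ⋖ B ⊔ C := by
    have h := (apply_covBy_apply_iff (tIso τ hτ_bij) (a := M₀) (b := M₀ ⊔ B)).mpr hcAT
    have h' : mapLat τ M₀ ⋖ mapLat τ (M₀ ⊔ B) := h
    rwa [hτsup, ← hBdef, ← hCdef] at h'
  have hBCcovB' : B ⊔ C ⋖ B' := by
    have h := (apply_covBy_apply_iff (tIso τ hτ_bij) (a := M₀ ⊔ B) (b := A')).mpr hcTA'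
    have h' : mapLat τ (M₀ ⊔ B) ⋖ mapLat τ A' := h
    rwa [hτsup, ← hBdef, ← hCdef, ← hB'def] at h'
  -- T ⊓ τT = B
  have hTCB : (M₀ ⊔ B) ⊓ (B ⊔ C) = B := by
    rcases hBcovT.eq_or_eq (le_inf le_sup_right le_sup_left)
        (inf_le_left : (M₀ ⊔ B) ⊓ (B ⊔ C) ≤ M₀ ⊔ B) with h | h
    · exact h
    · exfalso
      have hTle : M₀ ⊔ B ≤ B ⊔ C := by
        rw [← h]; exact inf_le_right
      rcases hBcovBC.eq_or_eq (le_sup_right : B ≤ M₀ ⊔ B) hTle with h' | h'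
      · exact hBcovT.lt.ne' h'
      · apply h_sup_not_stable
        rw [hτsup, ← hBdef, ← hCdef]
        exact h'.symm
  have hI2 : M₀ ⊓ (B ⊔ C) = M₀ ⊓ B :=
    calc M₀ ⊓ (B ⊔ C) = (M₀ ⊓ (M₀ ⊔ B)) ⊓ (B ⊔ C) := by
          rw [inf_eq_left.mpr (le_sup_left : M₀ ≤ M₀ ⊔ B)]
    _ = M₀ ⊓ ((M₀ ⊔ B) ⊓ (B ⊔ C)) := by rw [inf_assoc]
    _ = M₀ ⊓ B := by rw [hTCB]
  -- the dual of M₀ ⊓ B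
  have hDI : dualLat form (M₀ ⊓ B) = A' ⊔ B' := by
    have h := dualLat_sup form A' B'
    rw [hDA', hDB'] at h
    rw [← h, hDD (isLattice_sup hlatA' hlatB')]
  have hsupBC' : A' ⊔ B' = B' ⊔ C' := by
    have hstableDI : mapLat τ (A' ⊔ B') = A' ⊔ B' := by
      rw [← hDI, ← hDτ, h_inf_stable]
    have h := hτsup A' B'
    rw [hstableDI, ← hB'def, ← hC'def] at h
    exact h
  -- J = p A' + p B'
  set J := smulLat ((p : ℕ) : W₀) A' ⊔ smulLat ((p : ℕ) : W₀) B' with hJdef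
  have hJM : J ≤ M₀ := sup_le h1 h3'
  have hJB : J ≤ B := by
    have hJalt : J = smulLat ((p : ℕ) : W₀) B' ⊔ smulLat ((p : ℕ) : W₀) C' := by
      rw [hJdef, ← hPsup, hsupBC', hPsup]
    rw [hJalt]
    exact sup_le h1B h3B
  have hJI : J ≤ M₀ ⊓ B := le_inf hJM hJB
  have hlatPA' : IsLattice (K₀ := K₀) (smulLat ((p : ℕ) : W₀) A') := isLattice_smulLat hq hlatA'
  have hlatJ : IsLattice (K₀ := K₀) J := by
    rw [hJdef]; exact isLattice_sup hlatPA' (isLattice_smulLat hq hlatB')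
  have hlatI : IsLattice (K₀ := K₀) (M₀ ⊓ B) := isLattice_of_between hlatJ hlatM hJI inf_le_left
  -- pA' ⋖ J
  have hD1 : smulLat ((p : ℕ) : W₀) (dualLat form (smulLat ((p : ℕ) : W₀) A')) = M₀ := by
    rw [hPDP, hDA']
  have hDJ : smulLat ((p : ℕ) : W₀) (dualLat form J) = M₀ ⊓ B := by
    rw [hJdef, dualLat_sup, hPinf, hPDP, hPDP, hDA', hDB']
  have hDJcovD1 : dualLat form J ⋖ dualLat form (smulLat ((p : ℕ) : W₀) A') := by
    apply (apply_covBy_apply_iff (pIso ((p : ℕ) : W₀) hq)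
      (a := dualLat form J) (b := dualLat form (smulLat ((p : ℕ) : W₀) A'))).mp
    show smulLat ((p : ℕ) : W₀) (dualLat form J)
      ⋖ smulLat ((p : ℕ) : W₀) (dualLat form (smulLat ((p : ℕ) : W₀) A'))
    rw [hDJ, hD1]
    exact hIcovM
  have hGoal1 : smulLat ((p : ℕ) : W₀) A' ⋖ J := by
    have h := covBy_dualLat form halt hnondeg (isLattice_dualLat form hnondeg hlatJ)
      (isLattice_dualLat form hnondeg hlatPA') hDJcovD1
    rwa [hDD hlatPA', hDD hlatJ] at h
  -- J = M₀ ⊓ B via the chain bound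
  have hJeqI : J = M₀ ⊓ B := by
    by_contra hne
    have hJltI : J < M₀ ⊓ B := lt_of_le_of_ne hJI hne
    have hgs : StrictMono (![smulLat ((p : ℕ) : W₀) A', J, M₀ ⊓ B, M₀, M₀ ⊔ B, A'] :
        Fin 6 → Submodule W₀ N₀) := by
      rw [Fin.strictMono_iff_lt_succ]
      intro i
      fin_cases i
      · exact hGoal1.lt
      · exact hJltI
      · exact hIcovM.lt
      · exact hcAT.lt
      · exact hcTA'.lt
    exact chain_bound hdim hp_irr hlatA' hgs (le_refl _) (le_refl _)
  -- identification of S₀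
  have hDT : dualLat form T₀ = A' ⊓ B' := by
    rw [hT0, dualLat_sup, ← hA'def, hdualB]
  have hτDT : mapLat τ (dualLat form T₀) = B' ⊓ C' := by
    rw [hDT, hτinf, ← hB'def, ← hC'def]
  have hlatB'C' : IsLattice (K₀ := K₀) (B' ⊓ C') :=
    isLattice_of_between hlatB hlatB' (le_inf hBB' hBC') inf_le_left
  have hlatS0 : IsLattice (K₀ := K₀) (smulLat ((p : ℕ) : W₀) A'
      ⊔ smulLat ((p : ℕ) : W₀) (mapLat τ (dualLat form T₀))) := by
    rw [hτDT]
    exact isLattice_sup hlatPA' (isLattice_smulLat hq hlatB'C')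
  have hDBC : dualLat form (B' ⊓ C') = B ⊔ C := by
    have h := dualLat_sup form B C
    rw [hdualB, hdualC] at h
    rw [← h, hDD (isLattice_sup hlatB hlatC)]
  have hDS0 : smulLat ((p : ℕ) : W₀) (dualLat form (smulLat ((p : ℕ) : W₀) A'
      ⊔ smulLat ((p : ℕ) : W₀) (mapLat τ (dualLat form T₀)))) = M₀ ⊓ B := by
    rw [hτDT, dualLat_sup, hPinf, hPDP, hPDP, hDA', hDBC, hI2]
  have hDS0' : smulLat ((p : ℕ) : W₀) (dualLat form (M₀ ⊓ B)) = M₀ ⊓ B := by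
    rw [hDI, hPsup, ← hJdef, hJeqI]
  have hS0 : smulLat ((p : ℕ) : W₀) A'
      ⊔ smulLat ((p : ℕ) : W₀) (mapLat τ (dualLat form T₀)) = M₀ ⊓ B := by
    have hDeq : dualLat form (smulLat ((p : ℕ) : W₀) A'
        ⊔ smulLat ((p : ℕ) : W₀) (mapLat τ (dualLat form T₀))) = dualLat form (M₀ ⊓ B) :=
      hPinj (hDS0.trans hDS0'.symm)
    have h := congrArg (dualLat form) hDeq
    rwa [hDD hlatS0, hDD hlatI] at h
  -- the web-pair inequalities
  have hweb2 : smulLat ((p : ℕ) : W₀) A'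
      ⊔ smulLat ((p : ℕ) : W₀) (mapLat τ (dualLat form T₀)) ≤ mapLat τ (dualLat form T₀) := by
    rw [hS0, hτDT]
    exact le_inf (le_trans inf_le_left hMB') (le_trans inf_le_right hBC')
  have hPS : smulLat ((p : ℕ) : W₀) (mapLat τ (dualLat form (smulLat ((p : ℕ) : W₀) A'
      ⊔ smulLat ((p : ℕ) : W₀) (mapLat τ (dualLat form T₀))))) = M₀ ⊓ B := by
    rw [← hcomm, hDS0, h_inf_stable]
  have hweb3 : smulLat ((p : ℕ) : W₀) (mapLat τ (dualLat form (smulLat ((p : ℕ) : W₀) A'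
      ⊔ smulLat ((p : ℕ) : W₀) (mapLat τ (dualLat form T₀))))) ≤ T₀ := by
    rw [hPS, hT0]
    exact le_trans inf_le_left le_sup_left
  have hweb4 : T₀ ≤ mapLat τ (dualLat form (smulLat ((p : ℕ) : W₀) A'
      ⊔ smulLat ((p : ℕ) : W₀) (mapLat τ (dualLat form T₀)))) := by
    apply hPle.mp
    rw [hPS, hT0]
    refine le_trans (hPmono hcTA'.lt.le) ?_
    rw [← hJeqI, hJdef]
    exact le_sup_left
  have hGoal2 : SubIdx (smulLat ((p : ℕ) : W₀) A') (smulLat ((p : ℕ) : W₀) A'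
      ⊔ smulLat ((p : ℕ) : W₀) (mapLat τ (dualLat form T₀))) 1 := by
    apply subIdx_one_iff.mpr
    rw [hS0, ← hJeqI]
    exact hGoal1
  have hGoal3 : SubIdx (smulLat ((p : ℕ) : W₀) A'
      ⊔ smulLat ((p : ℕ) : W₀) (mapLat τ (dualLat form T₀))) M₀ 1 := by
    apply subIdx_one_iff.mpr
    rw [hS0]
    exact hIcovM
  refine ⟨hT0, hGoal2, hGoal3, hlatS0, ?_, hGoal2, hGoal3, hT₁, hT₂, le_sup_right, hweb2,
    hweb3, hweb4⟩
  rw [hT0]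
  exact isLattice_sup hlatM hlatB

end QURZ
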